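/- Let e = e₁, e₂, … be any infinite sequence of closed β-normal λ-terms, and define the numeral system c by c₀ = I and cₙ = <c_{n-1}, eₙ> for n ≥ 1. Then P_c = λn.(n T) is a Predecessor for c, i.e. (P_c c_{n+1}) ≃β cₙ for all n, and Z_c = λn.(n (λxλy.I) T F T) is a Zero Test for c, i.e. (Z_c c₀) ≃β T and (Z_c c_{n+1}) ≃β F for all n. -/

import Mathlib

/-- Untyped λ-terms in de Bruijn notation. -/
inductive Lam : Type
  | var : ℕ → Lam
  | app : Lam → Lam → Lam
  | lam : Lam → Lam
  deriving DecidableEq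

namespace Lam

/-- Shift by one the free variables with index ≥ `d`. -/
def lift (d : ℕ) : Lam → Lam
  | var n => if n < d then var n else var (n + 1)
  | app M N => app (lift d M) (lift d N)
  | lam M => lam (lift (d + 1) M)

/-- Capture-avoiding substitution of `N` for the free variable of index `n`. -/
def subst : Lam → ℕ → Lam → Lam
  | var m, n, N => if m = n then N else if n < m then var (m - 1) else var m
  | app M₁ M₂, n, N => app (subst M₁ n N) (subst M₂ n N)
  | lam M, n, N => lam (subst M (n + 1) (lift 0 N))

/-- One-step β-reduction (contraction of a β-redex anywhere in the term). -/
inductive Step : Lam → Lam → Prop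
  | beta (M N : Lam) : Step (app (lam M) N) (subst M 0 N)
  | appL {M M' : Lam} (N : Lam) : Step M M' → Step (app M N) (app M' N)
  | appR (M : Lam) {N N' : Lam} : Step N N' → Step (app M N) (app M N')
  | lam {M M' : Lam} : Step M M' → Step (Lam.lam M) (Lam.lam M')

/-- β-equivalence: the equivalence relation generated by one-step β-reduction. -/
def BetaEq : Lam → Lam → Prop := Relation.EqvGen Step

/-- The variable of index `n` occurs free in the term. -/
def HasFree : Lam → ℕ → Prop
  | var m, n => m = n
  | app M N, n => HasFree M n ∨ HasFree N n
  | lam M, n => HasFree M (n + 1)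

/-- A term is closed if it has no free variables. -/
def Closed (M : Lam) : Prop := ∀ n, ¬ HasFree M n

/-- A term is β-normal: it contains no β-redex. -/
def IsBetaNormal : Lam → Prop
  | app (lam _) _ => False
  | app M N => IsBetaNormal M ∧ IsBetaNormal N
  | lam M => IsBetaNormal M
  | var _ => True

/-- A term is βη-normal: it contains no β-redex and no η-redex
`λx.(M x)` with `x` not free in `M`. -/
def IsBetaEtaNormal : Lam → Prop
  | app (lam _) _ => False
  | app M N => IsBetaEtaNormal M ∧ IsBetaEtaNormal N
  | lam (app M (var 0)) => HasFree M 0 ∧ IsBetaEtaNormal (app M (var 0))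
  | lam M => IsBetaEtaNormal M
  | var _ => True

/-- `I = λx.x`. -/
def I : Lam := lam (var 0)

/-- `T = λxλy.x`. -/
def T : Lam := lam (lam (var 1))

/-- `F = λxλy.y`. -/
def F : Lam := lam (lam (var 0))

/-- The pair `<M,N> = λx.(x M N)` (the binder shifts the free variables of `M,N`). -/
def pair (M N : Lam) : Lam := lam (app (app (var 0) (lift 0 M)) (lift 0 N))

end Lam

/-- The numeral system `c` built on a sequence `e` (where `e i` codes the mathematical
`e_{i+1}`) : `c₀ = I` and `cₙ = <c_{n-1}, eₙ>` for `n ≥ 1`. -/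
def Lam.sysC (e : ℕ → Lam) : ℕ → Lam
  | 0 => Lam.I
  | n + 1 => Lam.pair (Lam.sysC e n) (e n)

namespace Lam

lemma lift_of_free (M : Lam) : ∀ d, (∀ n, d ≤ n → ¬ HasFree M n) → lift d M = M := by
  induction M with
  | var m =>
    intro d h
    simp only [lift]
    split
    · rfl
    · exact absurd rfl (h m (by omega))
  | app A B ihA ihB =>
    intro d h
    simp only [lift, ihA d (fun n hn hf => h n hn (Or.inl hf)),
      ihB d (fun n hn hf => h n hn (Or.inr hf))]
  | lam A ih =>
    intro d h
    simp only [lift]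
    rw [ih (d + 1) (fun n hn => by
      cases n with
      | zero => omega
      | succ m => exact h m (by omega))]

lemma subst_of_free (M : Lam) : ∀ k N, (∀ n, k ≤ n → ¬ HasFree M n) → subst M k N = M := by
  induction M with
  | var m =>
    intro k N h
    simp only [subst]
    split
    · next hh => exact (h m (by omega) rfl).elim
    · split
      · next h1 h2 => exact (h m (by omega) rfl).elim
      · rfl
  | app A B ihA ihB =>
    intro k N h
    simp only [subst, ihA k N (fun n hn hf => h n hn (Or.inl hf)),
      ihB k N (fun n hn hf => h n hn (Or.inr hf))]
  | lam A ih =>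
    intro k N h
    simp only [subst]
    rw [ih (k + 1) _ (fun n hn => by
      cases n with
      | zero => omega
      | succ m => exact h m (by omega))]

lemma Closed.lift_eq {M : Lam} (h : Closed M) (d : ℕ) : lift d M = M :=
  lift_of_free M d fun n _ => h n

lemma Closed.subst_eq {M : Lam} (h : Closed M) (k : ℕ) (N : Lam) : subst M k N = M :=
  subst_of_free M k N fun n _ => h n

lemma closed_I : Closed I := by intro n; simp [I, HasFree]
lemma closed_T : Closed T := by intro n; simp [T, HasFree]
lemma closed_F : Closed F := by intro n; simp [F, HasFree]

lemma closed_pair {M N : Lam} (hM : Closed M) (hN : Closed N) : Closed (pair M N) := by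
  intro n
  simp only [pair, HasFree, hM.lift_eq, hN.lift_eq]
  push_neg
  exact ⟨⟨by omega, hM _⟩, hN _⟩

lemma closed_sysC (e : ℕ → Lam) (he : ∀ i, Closed (e i)) : ∀ n, Closed (sysC e n)
  | 0 => closed_I
  | n + 1 => closed_pair (closed_sysC e he n) (he n)

lemma be_step {M N : Lam} (h : Step M N) : BetaEq M N := Relation.EqvGen.rel _ _ h

lemma be_trans {M N P : Lam} (h1 : BetaEq M N) (h2 : BetaEq N P) : BetaEq M P :=
  Relation.EqvGen.trans _ _ _ h1 h2

end Lam

/-- For any infinite sequence `e` of closed β-normal λ-terms and the numeral system `c`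
(`c₀ = I`, `cₙ = <c_{n-1}, eₙ>`), the closed term `P_c = λn.(n T)` is a Predecessor
for `c` and the closed term `Z_c = λn.(n (λxλy.I) T F T)` is a Zero Test for `c`. -/
theorem statement11 (e : ℕ → Lam)
    (he : ∀ i, Lam.Closed (e i) ∧ Lam.IsBetaNormal (e i)) :
    (Lam.Closed (Lam.lam (Lam.app (Lam.var 0) Lam.T)) ∧
      ∀ n, Lam.BetaEq (Lam.app (Lam.lam (Lam.app (Lam.var 0) Lam.T)) (Lam.sysC e (n + 1)))
        (Lam.sysC e n)) ∧
    (Lam.Closed (Lam.lam (Lam.app (Lam.app (Lam.app (Lam.app (Lam.var 0) (Lam.lam (Lam.lam Lam.I))) Lam.T) Lam.F) Lam.T)) ∧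
      Lam.BetaEq (Lam.app (Lam.lam (Lam.app (Lam.app (Lam.app (Lam.app (Lam.var 0) (Lam.lam (Lam.lam Lam.I))) Lam.T) Lam.F) Lam.T)) (Lam.sysC e 0)) Lam.T ∧
      ∀ n, Lam.BetaEq (Lam.app (Lam.lam (Lam.app (Lam.app (Lam.app (Lam.app (Lam.var 0) (Lam.lam (Lam.lam Lam.I))) Lam.T) Lam.F) Lam.T)) (Lam.sysC e (n + 1))) Lam.F) := by

  have hec : ∀ i, Lam.Closed (e i) := fun i => (he i).1
  have hC : ∀ n, Lam.Closed (Lam.sysC e n) := Lam.closed_sysC e hec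
  constructor
  · constructor
    · intro n
      simp only [Lam.HasFree, Lam.T]
      push_neg
      omega
    · intro n
      set C := Lam.sysC e n with hCdef
      set E := e n with hEdef
      -- step 1: beta: (λ. 0 T) <C,E>  →  <C,E> T
      have s1 : Lam.Step (Lam.app (Lam.lam (Lam.app (Lam.var 0) Lam.T)) (Lam.sysC e (n+1)))
          (Lam.app (Lam.sysC e (n+1)) Lam.T) := by
        have := Lam.Step.beta (Lam.app (Lam.var 0) Lam.T) (Lam.sysC e (n+1))
        simpa [Lam.subst, Lam.closed_T.subst_eq] using this
      -- step 2: <C,E> T → app (app T C) E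
      have s2 : Lam.Step (Lam.app (Lam.sysC e (n+1)) Lam.T)
          (Lam.app (Lam.app Lam.T C) E) := by
        have := Lam.Step.beta (Lam.app (Lam.app (Lam.var 0) (Lam.lift 0 C)) (Lam.lift 0 E)) Lam.T
        simpa [hCdef, hEdef, Lam.sysC, Lam.pair, Lam.subst, (hC n).lift_eq, (hec n).lift_eq,
          (hC n).subst_eq, (hec n).subst_eq] using this
      -- step 3: app T C → lam C
      have s3 : Lam.Step (Lam.app (Lam.app Lam.T C) E) (Lam.app (Lam.lam C) E) := by
        apply Lam.Step.appL
        have := Lam.Step.beta (Lam.lam (Lam.var 1)) C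
        simpa [hCdef, Lam.T, Lam.subst, (hC n).lift_eq] using this
      -- step 4: app (lam C) E → C
      have s4 : Lam.Step (Lam.app (Lam.lam C) E) C := by
        have := Lam.Step.beta C E
        simpa [hCdef, (hC n).subst_eq] using this
      exact Lam.be_trans (Lam.be_step s1) (Lam.be_trans (Lam.be_step s2)
        (Lam.be_trans (Lam.be_step s3) (Lam.be_step s4)))
  · refine ⟨?_, ?_, ?_⟩
    · intro n
      simp only [Lam.HasFree, Lam.T, Lam.F, Lam.I]
      push_neg
      omega
    · -- zero test on c₀ = I
      set K := Lam.lam (Lam.lam Lam.I) with hK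
      have hKc : Lam.Closed K := by intro n; simp [hK, Lam.I, Lam.HasFree]
      have s1 : Lam.Step
          (Lam.app (Lam.lam (Lam.app (Lam.app (Lam.app (Lam.app (Lam.var 0) K) Lam.T) Lam.F) Lam.T)) (Lam.sysC e 0))
          (Lam.app (Lam.app (Lam.app (Lam.app Lam.I K) Lam.T) Lam.F) Lam.T) := by
        have := Lam.Step.beta (Lam.app (Lam.app (Lam.app (Lam.app (Lam.var 0) K) Lam.T) Lam.F) Lam.T) Lam.I
        simpa [Lam.sysC, Lam.subst, hKc.subst_eq, Lam.closed_T.subst_eq, Lam.closed_F.subst_eq] using this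
      have s2 : Lam.Step (Lam.app (Lam.app (Lam.app (Lam.app Lam.I K) Lam.T) Lam.F) Lam.T)
          (Lam.app (Lam.app (Lam.app K Lam.T) Lam.F) Lam.T) := by
        apply Lam.Step.appL; apply Lam.Step.appL; apply Lam.Step.appL
        have := Lam.Step.beta (Lam.var 0) K
        simpa [Lam.I, Lam.subst] using this
      have s3 : Lam.Step (Lam.app (Lam.app (Lam.app K Lam.T) Lam.F) Lam.T)
          (Lam.app (Lam.app (Lam.lam Lam.I) Lam.F) Lam.T) := by
        apply Lam.Step.appL; apply Lam.Step.appL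
        have := Lam.Step.beta (Lam.lam Lam.I) Lam.T
        simpa [hK, Lam.subst, Lam.closed_I.subst_eq] using this
      have s4 : Lam.Step (Lam.app (Lam.app (Lam.lam Lam.I) Lam.F) Lam.T)
          (Lam.app Lam.I Lam.T) := by
        apply Lam.Step.appL
        have := Lam.Step.beta Lam.I Lam.F
        simpa [Lam.closed_I.subst_eq] using this
      have s5 : Lam.Step (Lam.app Lam.I Lam.T) Lam.T := by
        have := Lam.Step.beta (Lam.var 0) Lam.T
        simpa [Lam.I, Lam.subst] using this
      exact Lam.be_trans (Lam.be_step s1) (Lam.be_trans (Lam.be_step s2)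
        (Lam.be_trans (Lam.be_step s3) (Lam.be_trans (Lam.be_step s4) (Lam.be_step s5))))
    · intro n
      set K := Lam.lam (Lam.lam Lam.I) with hK
      have hKc : Lam.Closed K := by intro n; simp [hK, Lam.I, Lam.HasFree]
      set C := Lam.sysC e n with hCdef
      set E := e n with hEdef
      have s1 : Lam.Step
          (Lam.app (Lam.lam (Lam.app (Lam.app (Lam.app (Lam.app (Lam.var 0) K) Lam.T) Lam.F) Lam.T)) (Lam.sysC e (n+1)))
          (Lam.app (Lam.app (Lam.app (Lam.app (Lam.sysC e (n+1)) K) Lam.T) Lam.F) Lam.T) := by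
        have := Lam.Step.beta (Lam.app (Lam.app (Lam.app (Lam.app (Lam.var 0) K) Lam.T) Lam.F) Lam.T) (Lam.sysC e (n+1))
        simpa [Lam.subst, hKc.subst_eq, Lam.closed_T.subst_eq, Lam.closed_F.subst_eq] using this
      have s2 : Lam.Step
          (Lam.app (Lam.app (Lam.app (Lam.app (Lam.sysC e (n+1)) K) Lam.T) Lam.F) Lam.T)
          (Lam.app (Lam.app (Lam.app (Lam.app (Lam.app K C) E) Lam.T) Lam.F) Lam.T) := by
        apply Lam.Step.appL; apply Lam.Step.appL; apply Lam.Step.appL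
        have := Lam.Step.beta (Lam.app (Lam.app (Lam.var 0) (Lam.lift 0 C)) (Lam.lift 0 E)) K
        simpa [hCdef, hEdef, Lam.sysC, Lam.pair, Lam.subst, (hC n).lift_eq, (hec n).lift_eq,
          (hC n).subst_eq, (hec n).subst_eq] using this
      have s3 : Lam.Step
          (Lam.app (Lam.app (Lam.app (Lam.app (Lam.app K C) E) Lam.T) Lam.F) Lam.T)
          (Lam.app (Lam.app (Lam.app (Lam.app (Lam.lam Lam.I) E) Lam.T) Lam.F) Lam.T) := by
        apply Lam.Step.appL; apply Lam.Step.appL; apply Lam.Step.appL; apply Lam.Step.appL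
        have := Lam.Step.beta (Lam.lam Lam.I) C
        simpa [hK, Lam.subst, Lam.closed_I.subst_eq] using this
      have s4 : Lam.Step
          (Lam.app (Lam.app (Lam.app (Lam.app (Lam.lam Lam.I) E) Lam.T) Lam.F) Lam.T)
          (Lam.app (Lam.app (Lam.app Lam.I Lam.T) Lam.F) Lam.T) := by
        apply Lam.Step.appL; apply Lam.Step.appL; apply Lam.Step.appL
        have := Lam.Step.beta Lam.I E
        simpa [Lam.closed_I.subst_eq] using this
      have s5 : Lam.Step (Lam.app (Lam.app (Lam.app Lam.I Lam.T) Lam.F) Lam.T)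
          (Lam.app (Lam.app Lam.T Lam.F) Lam.T) := by
        apply Lam.Step.appL; apply Lam.Step.appL
        have := Lam.Step.beta (Lam.var 0) Lam.T
        simpa [Lam.I, Lam.subst] using this
      have s6 : Lam.Step (Lam.app (Lam.app Lam.T Lam.F) Lam.T)
          (Lam.app (Lam.lam Lam.F) Lam.T) := by
        apply Lam.Step.appL
        have := Lam.Step.beta (Lam.lam (Lam.var 1)) Lam.F
        simpa [Lam.T, Lam.subst, Lam.closed_F.lift_eq] using this
      have s7 : Lam.Step (Lam.app (Lam.lam Lam.F) Lam.T) Lam.F := by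
        have := Lam.Step.beta Lam.F Lam.T
        simpa [Lam.closed_F.subst_eq] using this
      exact Lam.be_trans (Lam.be_step s1) (Lam.be_trans (Lam.be_step s2)
        (Lam.be_trans (Lam.be_step s3) (Lam.be_trans (Lam.be_step s4)
        (Lam.be_trans (Lam.be_step s5) (Lam.be_trans (Lam.be_step s6) (Lam.be_step s7))))))
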